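/- arXiv:2104.14329 — 2 statements merged into one kernel-verified Lean document; each statement's English description precedes it below -/
import Mathlib

section
/- Let $\mathcal{K}_a \in \mathbb{R}^{N\times N}$ be a symmetric positive semidefinite kernel matrix with entries $\mathcal{K}_a(y_i,y_k)$, and let $Z$ be a symmetric positive semidefinite bi-stochastic matrix with $C_{il} = Z_{il} - \frac{1}{N}\sum_k Z_{ik}$. Then $\sum_{i,l} \mathcal{K}_a(y_l,y_i) C_{il} \geq 0$. -/
open Finset Matrix

lemma psd_quad_nonneg {N : ℕ} (Z : Matrix (Fin N) (Fin N) ℝ)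
    (hZpsd : Z.PosSemidef) (x : Fin N → ℝ) :
    0 ≤ ∑ i, ∑ l, x i * Z i l * x l := by
  have := hZpsd.dotProduct_mulVec_nonneg x
  simpa [dotProduct, Matrix.mulVec, Finset.mul_sum, mul_assoc] using this

lemma quad_lower {N : ℕ} (Z : Matrix (Fin N) (Fin N) ℝ)
    (hZpsd : Z.PosSemidef)
    (hrow : ∀ i, ∑ l, Z i l = 1) (hcol : ∀ l, ∑ i, Z i l = 1)
    (x : Fin N → ℝ) :
    (1 / (N:ℝ)) * (∑ i, x i)^2 ≤ ∑ i, ∑ l, x i * Z i l * x l := by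
  rcases Nat.eq_zero_or_pos N with h0 | hN
  · subst h0; simp
  have hNne : (N:ℝ) ≠ 0 := Nat.cast_ne_zero.mpr hN.ne'
  set s := ∑ i, x i with hs
  set a := s / N with ha
  set w : Fin N → ℝ := fun i => x i - a with hw
  have hwsum : ∑ i, w i = 0 := by
    simp only [hw, Finset.sum_sub_distrib, Finset.sum_const, card_univ, Fintype.card_fin,
      nsmul_eq_mul, ha, ← hs]
    field_simp; ring
  have hsplit : ∑ i, ∑ l, x i * Z i l * x l
      = (∑ i, ∑ l, w i * Z i l * w l) + (∑ i, ∑ l, a * Z i l * w l)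
        + (∑ i, ∑ l, w i * Z i l * a) + (∑ i, ∑ l, a * Z i l * a) := by
    simp only [← Finset.sum_add_distrib]
    refine Finset.sum_congr rfl fun i _ => Finset.sum_congr rfl fun l _ => ?_
    have hx : x i = w i + a := by simp [hw]
    have hx' : x l = w l + a := by simp [hw]
    rw [hx, hx']; ring
  have h2 : ∑ i, ∑ l, a * Z i l * w l = 0 := by
    rw [Finset.sum_comm]
    calc ∑ l, ∑ i, a * Z i l * w l = ∑ l, a * w l * ∑ i, Z i l := by
          refine Finset.sum_congr rfl fun l _ => ?_
          rw [Finset.mul_sum]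
          exact Finset.sum_congr rfl fun i _ => by ring
      _ = a * ∑ l, w l := by simp [hcol, Finset.mul_sum]
      _ = 0 := by rw [hwsum, mul_zero]
  have h3 : ∑ i, ∑ l, w i * Z i l * a = 0 := by
    calc ∑ i, ∑ l, w i * Z i l * a = ∑ i, a * w i * ∑ l, Z i l := by
          refine Finset.sum_congr rfl fun i _ => ?_
          rw [Finset.mul_sum]
          exact Finset.sum_congr rfl fun l _ => by ring
      _ = a * ∑ i, w i := by simp [hrow, Finset.mul_sum]
      _ = 0 := by rw [hwsum, mul_zero]
  have h4 : ∑ i, ∑ l, a * Z i l * a = a^2 * N := by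
    calc ∑ i, ∑ l, a * Z i l * a = ∑ i, a^2 * ∑ l, Z i l := by
          refine Finset.sum_congr rfl fun i _ => ?_
          rw [Finset.mul_sum]
          exact Finset.sum_congr rfl fun l _ => by ring
      _ = ∑ i : Fin N, a^2 := by simp [hrow]
      _ = a^2 * N := by simp [Finset.sum_const, mul_comm]
  have hwpos : 0 ≤ ∑ i, ∑ l, w i * Z i l * w l := psd_quad_nonneg Z hZpsd w
  have haN : a^2 * N = (1 / (N:ℝ)) * s^2 := by
    rw [ha]; field_simp
  rw [hsplit, h2, h3, h4, haN]
  linarith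

lemma cquad_nonneg {N : ℕ} (Z : Matrix (Fin N) (Fin N) ℝ)
    (hZpsd : Z.PosSemidef)
    (hrow : ∀ i, ∑ l, Z i l = 1) (hcol : ∀ l, ∑ i, Z i l = 1)
    (x : Fin N → ℝ) :
    0 ≤ ∑ i, ∑ l, x i * (Z i l - 1 / (N:ℝ)) * x l := by
  have hsq : ∑ i, ∑ l, x i * (1 / (N:ℝ)) * x l = (1 / (N:ℝ)) * (∑ i, x i)^2 := by
    rw [sq, Finset.sum_mul_sum, Finset.mul_sum]
    exact Finset.sum_congr rfl fun i _ => by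
      rw [Finset.mul_sum]
      exact Finset.sum_congr rfl fun l _ => by ring
  have hexp : ∑ i, ∑ l, x i * (Z i l - 1 / (N:ℝ)) * x l
      = (∑ i, ∑ l, x i * Z i l * x l) - ∑ i, ∑ l, x i * (1 / (N:ℝ)) * x l := by
    rw [← Finset.sum_sub_distrib]
    refine Finset.sum_congr rfl fun i _ => ?_
    rw [← Finset.sum_sub_distrib]
    exact Finset.sum_congr rfl fun l _ => by ring
  rw [hexp, hsq, sub_nonneg]
  exact quad_lower Z hZpsd hrow hcol x

/-- Nonnegativity of the data-driven test component of Problem 1: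
the inner product of a PSD kernel matrix `K_a` with the centered matrix
`C_{il} = Z_{il} - (1/N) ∑_k Z_{ik}` built from a symmetric PSD bi-stochastic `Z`
is nonnegative. -/
theorem stmt5 {N : ℕ} (Ka Z : Matrix (Fin N) (Fin N) ℝ)
    (hKa : Ka.PosSemidef)
    (hZpsd : Z.PosSemidef) (hZsymm : Z.IsSymm)
    (hZnn : ∀ i l, 0 ≤ Z i l)
    (hrow : ∀ i, ∑ l, Z i l = 1) (hcol : ∀ l, ∑ i, Z i l = 1) :
    0 ≤ ∑ i, ∑ l, Ka l i * (Z i l - (1 / (N : ℝ)) * ∑ k, Z i k) := by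
  obtain ⟨B, hB⟩ : ∃ B : Matrix (Fin N) (Fin N) ℝ, Ka = Bᴴ * B := by
    open scoped MatrixOrder in
    have h0 : 0 ≤ Ka := Matrix.nonneg_iff_posSemidef.mpr hKa
    open scoped MatrixOrder in
    refine ⟨CFC.sqrt Ka, ?_⟩
    open scoped MatrixOrder in
    rw [← Matrix.star_eq_conjTranspose, (CFC.sqrt_nonneg Ka).isSelfAdjoint.star_eq, CFC.sqrt_mul_sqrt_self Ka h0]
  have hKent : ∀ l i, Ka l i = ∑ j, B j l * B j i := by
    intro l i
    rw [hB]
    simp [Matrix.mul_apply, Matrix.conjTranspose_apply]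
  have key : ∑ i, ∑ l, Ka l i * (Z i l - (1 / (N : ℝ)) * ∑ k, Z i k)
      = ∑ j, ∑ i, ∑ l, B j i * (Z i l - 1 / (N:ℝ)) * B j l := by
    have step1 : ∑ i, ∑ l, Ka l i * (Z i l - (1 / (N : ℝ)) * ∑ k, Z i k)
        = ∑ i, ∑ j, ∑ l, B j i * (Z i l - 1 / (N:ℝ)) * B j l := by
      refine Finset.sum_congr rfl fun i _ => ?_
      rw [show (∑ l, Ka l i * (Z i l - (1 / (N : ℝ)) * ∑ k, Z i k))
          = ∑ l, ∑ j, B j i * (Z i l - 1 / (N:ℝ)) * B j l from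
        Finset.sum_congr rfl fun l _ => by
          rw [hKent, hrow, Finset.sum_mul]
          exact Finset.sum_congr rfl fun j _ => by ring]
      exact Finset.sum_comm
    rw [step1]
    exact Finset.sum_comm
  rw [key]
  exact Finset.sum_nonneg fun j _ => cquad_nonneg Z hZpsd hrow hcol (fun i => B j i)
end

section
/- Let $Z$ be a symmetric positive semidefinite bi-stochastic $N\times N$ matrix, $C_{ki} = Z_{ki} - \frac{1}{N}\sum_j Z_{kj}$, and $f:\mathbb{R}^d\to\mathbb{R}$ any function. Then for any points $y_1,\dots,y_N\in\mathbb{R}^d$, $\sum_{i,k} f(y_i) f(y_k) C_{ki} \geq 0$. -/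
open Finset

/-- Nonnegativity of the data-driven test term in Problem 2: the quadratic form of the
centered matrix `C_{ki} = Z_{ki} - (1/N) ∑_j Z_{kj}` at the vector `(f(y_1),…,f(y_N))`
is nonnegative. -/
theorem stmt6 {N d : ℕ} (Z : Matrix (Fin N) (Fin N) ℝ)
    (hZpsd : Z.PosSemidef) (hZsymm : Z.IsSymm)
    (hZnn : ∀ k i, 0 ≤ Z k i)
    (hrow : ∀ k, ∑ i, Z k i = 1) (hcol : ∀ i, ∑ k, Z k i = 1)
    (f : (Fin d → ℝ) → ℝ) (y : Fin N → (Fin d → ℝ)) :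
    0 ≤ ∑ i, ∑ k, f (y i) * f (y k) * (Z k i - (1 / (N : ℝ)) * ∑ j, Z k j) := by
  rcases Nat.eq_zero_or_pos N with h | h
  · subst h; simp
  have hN : (N : ℝ) ≠ 0 := by positivity
  set v : Fin N → ℝ := fun i => f (y i) with hv
  set s : ℝ := ∑ i, v i with hs
  set w : Fin N → ℝ := fun i => v i - s / N with hw
  have hpsd := hZpsd.dotProduct_mulVec_nonneg w
  have hsym : ∀ i k, Z i k = Z k i := fun i k => (hZsymm.apply i k).symm
  have hexp : dotProduct (star w) (Z.mulVec w) = ∑ i, ∑ k, w i * Z i k * w k := by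
    simp [dotProduct, Matrix.mulVec, Finset.mul_sum, mul_assoc]
  have hZsum : ∑ i, ∑ k, Z i k = (N : ℝ) := by
    simp [hrow]
  have hZv : ∑ i, ∑ k, Z i k * v k = s := by
    rw [Finset.sum_comm]
    simp only [← Finset.sum_mul]
    simp [hcol]
    exact hs.symm
  have hvZ : ∑ i, ∑ k, v i * Z i k = s := by
    simp only [← Finset.mul_sum]
    simp [hrow]
    exact hs.symm
  have key : dotProduct (star w) (Z.mulVec w)
      = ∑ i, ∑ k, v i * v k * Z k i - s ^ 2 / N := by
    rw [hexp]
    have : ∀ i k, w i * Z i k * w k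
        = v i * v k * Z k i - (s / N) * (Z i k * v k) - (s / N) * (v i * Z i k)
          + (s / N) ^ 2 * Z i k := by
      intro i k; rw [hsym i k]; simp only [hw]; ring
    simp only [this, Finset.sum_add_distrib, Finset.sum_sub_distrib,
      ← Finset.mul_sum, hZv, hvZ, hZsum]
    simp only [hrow, mul_one, ← hs]
    field_simp
    ring
  have hgoal : ∑ i, ∑ k, f (y i) * f (y k) * (Z k i - (1 / (N : ℝ)) * ∑ j, Z k j)
      = ∑ i, ∑ k, v i * v k * Z k i - s ^ 2 / N := by
    have : ∀ i k : Fin N, f (y i) * f (y k) * (Z k i - (1 / (N : ℝ)) * ∑ j, Z k j)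
        = v i * v k * Z k i - (1 / N) * (v i * v k) := by
      intro i k; simp only [hv, hrow k]; ring
    simp only [this, Finset.sum_sub_distrib, ← Finset.mul_sum, ← Finset.sum_mul, ← hs]
    field_simp
  rw [hgoal, ← key]
  exact hpsd
end
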